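/- For every positive integer n that is a power of two, there exists a matrix W ∈ {0,1}^{n×n} such that for all z ∈ ℝ^n, ‖Wz‖₂² ≥ (n/4)·(∑_{i=2}^n z_i²), i.e., the squared Euclidean norm of Wz is at least n/4 times the sum of the squares of all coordinates of z except the first. -/

import Mathlib

open Finset

noncomputable def e2 : ZMod 2 → ℝ := fun x => if x = 0 then 1 else -1

lemma zmod2_cases (x : ZMod 2) : x = 0 ∨ x = 1 := by revert x; decide

lemma e2_add (x y : ZMod 2) : e2 (x + y) = e2 x * e2 y := by
  rcases zmod2_cases x with h | h <;> rcases zmod2_cases y with h' | h' <;>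
    subst h <;> subst h' <;> norm_num [e2] <;> rfl

lemma e2_add' (x y : ZMod 2) : e2 x * e2 y = e2 (x + y) := (e2_add x y).symm

lemma e2_sum {ι : Type*} (s : Finset ι) (f : ι → ZMod 2) :
    e2 (∑ i ∈ s, f i) = ∏ i ∈ s, e2 (f i) := by
  induction s using Finset.cons_induction with
  | empty => simp [e2]
  | cons a s ha ih => simp [Finset.sum_cons, Finset.prod_cons, e2_add, ih]

lemma sum_zmod2 (f : ZMod 2 → ℝ) : ∑ c : ZMod 2, f c = f 0 + f 1 := by
  have : (univ : Finset (ZMod 2)) = {0, 1} := by decide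
  rw [this, Finset.sum_pair (by decide)]

lemma sum_e2 {t : ℕ} (a : Fin t → ZMod 2) :
    ∑ b : Fin t → ZMod 2, e2 (∑ i, a i * b i)
      = if a = 0 then (2 ^ t : ℝ) else 0 := by
  have h1 : ∀ b : Fin t → ZMod 2, e2 (∑ i, a i * b i) = ∏ i, e2 (a i * b i) :=
    fun b => e2_sum _ _
  simp_rw [h1]
  rw [← Fintype.piFinset_univ,
    ← Finset.prod_univ_sum (fun _ : Fin t => (univ : Finset (ZMod 2))) (fun i c => e2 (a i * c))]
  have h2 : ∀ i : Fin t, ∑ c : ZMod 2, e2 (a i * c) = if a i = 0 then 2 else 0 := by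
    intro i
    rw [sum_zmod2]
    rcases zmod2_cases (a i) with h | h <;> simp [h, e2] <;> norm_num
  simp_rw [h2]
  by_cases ha : a = 0
  · subst ha; simp [Finset.card_univ]
  · obtain ⟨i, hi⟩ := Function.ne_iff.mp ha
    rw [if_neg ha]
    exact Finset.prod_eq_zero (Finset.mem_univ i) (by simpa using hi)

lemma core_ineq (t : ℕ) (z : (Fin t → ZMod 2) → ℝ) :
    (2 ^ t : ℝ) / 4 * ∑ b ∈ univ.filter (fun b => b ≠ (0 : Fin t → ZMod 2)), z b ^ 2
      ≤ ∑ a : Fin t → ZMod 2, (∑ b, (1 + e2 (∑ i, a i * b i)) / 2 * z b) ^ 2 := by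
  set N : ℝ := (2 ^ t : ℝ) with hN
  set s : ℝ := ∑ b : Fin t → ZMod 2, z b with hs
  set h : (Fin t → ZMod 2) → ℝ :=
    fun a => ∑ b : Fin t → ZMod 2, e2 (∑ i, a i * b i) * z b with hh
  have hNpos : (0 : ℝ) < N := by positivity
  have sum_e2' : ∀ d : Fin t → ZMod 2,
      ∑ a : Fin t → ZMod 2, e2 (∑ i, a i * d i) = if d = 0 then N else 0 := by
    intro d
    have : ∀ a : Fin t → ZMod 2, (∑ i, a i * d i) = ∑ i, d i * a i := by
      intro a; exact Finset.sum_congr rfl fun i _ => mul_comm _ _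
    simp_rw [this]
    exact sum_e2 d
  have inner : ∀ a : Fin t → ZMod 2,
      (∑ b, (1 + e2 (∑ i, a i * b i)) / 2 * z b) = (s + h a) / 2 := by
    intro a
    rw [hs, hh]
    rw [← Finset.sum_add_distrib, Finset.sum_div]
    apply Finset.sum_congr rfl
    intro b _
    ring
  simp_rw [inner]
  have hA : ∑ a, h a = N * z 0 := by
    rw [hh]
    rw [Finset.sum_comm]
    have : ∀ b : Fin t → ZMod 2,
        (∑ a : Fin t → ZMod 2, e2 (∑ i, a i * b i) * z b)
          = (if b = 0 then N else 0) * z b := by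
      intro b; rw [← Finset.sum_mul, sum_e2' b]
    simp_rw [this]
    simp
  have hB : ∑ a, h a ^ 2 = N * ∑ b, z b ^ 2 := by
    have expand : ∀ a, h a ^ 2
        = ∑ b, ∑ c, e2 (∑ i, a i * b i) * e2 (∑ i, a i * c i) * (z b * z c) := by
      intro a
      rw [hh, sq, Finset.sum_mul_sum]
      apply Finset.sum_congr rfl; intro b _
      apply Finset.sum_congr rfl; intro c _
      ring
    simp_rw [expand]
    rw [Finset.sum_comm]
    have step : ∀ b : Fin t → ZMod 2,
        (∑ a : Fin t → ZMod 2, ∑ c : Fin t → ZMod 2,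
          e2 (∑ i, a i * b i) * e2 (∑ i, a i * c i) * (z b * z c)) = N * z b ^ 2 := by
      intro b
      rw [Finset.sum_comm]
      have inner2 : ∀ c : Fin t → ZMod 2,
          (∑ a : Fin t → ZMod 2, e2 (∑ i, a i * b i) * e2 (∑ i, a i * c i) * (z b * z c))
            = (if b + c = 0 then N else 0) * (z b * z c) := by
        intro c
        rw [← Finset.sum_mul]
        congr 1
        have : ∀ a : Fin t → ZMod 2,
            e2 (∑ i, a i * b i) * e2 (∑ i, a i * c i) = e2 (∑ i, a i * (b + c) i) := by
          intro a
          rw [e2_add', ← Finset.sum_add_distrib]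
          congr 1
          exact Finset.sum_congr rfl fun i _ => by simp [Pi.add_apply, mul_add]
        simp_rw [this]
        exact sum_e2' (b + c)
      simp_rw [inner2]
      have zmod2_addeq : ∀ x y : ZMod 2, x + y = 0 ↔ y = x := by decide
      have key : ∀ c : Fin t → ZMod 2, (b + c = 0) ↔ (c = b) := by
        intro c
        constructor
        · intro hbc
          funext i
          exact (zmod2_addeq _ _).mp (congrFun hbc i)
        · rintro rfl
          funext i
          exact (zmod2_addeq _ _).mpr rfl
      have rwt : ∀ c : Fin t → ZMod 2,
          (if b + c = 0 then N else 0) * (z b * z c)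
            = if c = b then N * (z b * z c) else 0 := by
        intro c; rw [if_congr (key c) rfl rfl, ite_mul, zero_mul]
      simp_rw [rwt]
      rw [Finset.sum_ite_eq' univ b (fun c => N * (z b * z c))]
      simp only [Finset.mem_univ, if_true]
      ring
    simp_rw [step]
    rw [← Finset.mul_sum]
  have expand2 : ∑ a : Fin t → ZMod 2, ((s + h a) / 2) ^ 2
      = (N * s ^ 2 + 2 * s * (N * z 0) + N * ∑ b, z b ^ 2) / 4 := by
    have : ∀ a : Fin t → ZMod 2, ((s + h a) / 2) ^ 2
        = (s ^ 2 + 2 * s * h a + h a ^ 2) / 4 := by intro a; ring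
    simp_rw [this]
    rw [← Finset.sum_div]
    rw [Finset.sum_add_distrib, Finset.sum_add_distrib, ← Finset.mul_sum, hA, hB,
      Finset.sum_const, Finset.card_univ]
    simp only [Fintype.card_fun, Fintype.card_fin, ZMod.card, nsmul_eq_mul, hN]
    push_cast
    ring
  rw [expand2]
  have hsplit : ∑ b : Fin t → ZMod 2, z b ^ 2
      = z 0 ^ 2 + ∑ b ∈ univ.filter (fun b => b ≠ (0 : Fin t → ZMod 2)), z b ^ 2 := by
    rw [Finset.filter_ne' univ 0]
    exact (Finset.add_sum_erase univ (fun b => z b ^ 2) (Finset.mem_univ 0)).symm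
  rw [hsplit]
  nlinarith [sq_nonneg (s + z 0), mul_nonneg hNpos.le (sq_nonneg (s + z 0)),
    hNpos.le]

/-- For every positive integer `n` that is a power of two, there exists a
matrix `W ∈ {0,1}^{n×n}` such that for all `z ∈ ℝ^n`,
`‖Wz‖₂² ≥ (n/4) · (∑_{i=2}^n z_i²)`, i.e. the squared Euclidean norm of `Wz` is at least
`n/4` times the sum of the squares of all coordinates of `z` except the first. -/
theorem hadamard_discrepancy (n t : ℕ) (hn : n = 2 ^ t) :
    ∃ W : Matrix (Fin n) (Fin n) ℝ,
      (∀ i j, W i j = 0 ∨ W i j = 1) ∧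
      ∀ z : Fin n → ℝ,
        (n : ℝ) / 4 * (∑ i ∈ Finset.univ.filter (fun i : Fin n => (i : ℕ) ≠ 0), z i ^ 2)
          ≤ ∑ i : Fin n, (W.mulVec z i) ^ 2 := by
  have hn0 : 0 < n := by subst hn; positivity
  haveI : NeZero n := ⟨hn0.ne'⟩
  have hcard : Fintype.card (Fin n) = Fintype.card (Fin t → ZMod 2) := by
    simp [hn, Fintype.card_fun]
  let σ₀ : Fin n ≃ (Fin t → ZMod 2) := Fintype.equivOfCardEq hcard
  let σ : Fin n ≃ (Fin t → ZMod 2) := σ₀.trans (Equiv.swap (σ₀ 0) 0)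
  have hσ0 : σ 0 = 0 := by
    simp [σ, Equiv.swap_apply_left]
  refine ⟨fun i j => (1 + e2 (∑ k, σ i k * σ j k)) / 2, ?_, ?_⟩
  · intro i j
    rcases zmod2_cases 0 with _ | _ <;>
    by_cases h : (∑ k, σ i k * σ j k) = 0
    all_goals simp [e2, h] <;> norm_num
  · intro z
    have hmv : ∀ i : Fin n,
        Matrix.mulVec (fun i j => (1 + e2 (∑ k, σ i k * σ j k)) / 2) z i
          = ∑ b : Fin t → ZMod 2, (1 + e2 (∑ k, σ i k * b k)) / 2 * z (σ.symm b) := by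
      intro i
      simp only [Matrix.mulVec, dotProduct]
      rw [← Equiv.sum_comp σ (fun b => (1 + e2 (∑ k, σ i k * b k)) / 2 * z (σ.symm b))]
      exact Finset.sum_congr rfl fun j _ => by rw [Equiv.symm_apply_apply]
    simp_rw [hmv]
    have hR : ∑ i : Fin n, (∑ b : Fin t → ZMod 2,
          (1 + e2 (∑ k, σ i k * b k)) / 2 * z (σ.symm b)) ^ 2
        = ∑ a : Fin t → ZMod 2, (∑ b : Fin t → ZMod 2,
          (1 + e2 (∑ k, a k * b k)) / 2 * z (σ.symm b)) ^ 2 := by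
      rw [← Equiv.sum_comp σ (fun a => (∑ b : Fin t → ZMod 2,
          (1 + e2 (∑ k, a k * b k)) / 2 * z (σ.symm b)) ^ 2)]
    have hL : ∑ i ∈ Finset.univ.filter (fun i : Fin n => (i : ℕ) ≠ 0), z i ^ 2
        = ∑ b ∈ univ.filter (fun b => b ≠ (0 : Fin t → ZMod 2)), (z (σ.symm b)) ^ 2 := by
      apply Finset.sum_equiv σ
      · intro i
        simp only [Finset.mem_filter, Finset.mem_univ, true_and]
        have h1 : (i : ℕ) ≠ 0 ↔ i ≠ 0 := by
          rw [Ne, Ne, Fin.ext_iff, Fin.val_zero]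
        rw [h1]
        constructor
        · intro hi hc
          exact hi (σ.injective (by rw [hσ0]; exact hc))
        · intro hi hc
          exact hi (by rw [hc, hσ0])
      · intro i _
        rw [Equiv.symm_apply_apply]
    rw [hR, hL]
    have := core_ineq t (fun b => z (σ.symm b))
    have hcast : (n : ℝ) = (2 ^ t : ℝ) := by rw [hn]; push_cast; ring
    rw [hcast]
    exact this
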